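/- (Theorem 1, tightness.) Suppose L ≤ B and P ≥ L−1, and choose the impulse responses h_b = e_b ∈ ℂ^L (the b-th standard basis vector) for b = 1,…,L and h_b = 0 for b = L+1,…,B. Then for every subcarrier k ∈ {0,…,N−1}, the range of the linear map Φ_k : ℂ^{N+P} → ℂ^B with (Φ_k(w))_b = (F · T(h_b) w)_k has dimension exactly L. -/

import Mathlib

open Matrix

/-- The unitary `N`-point DFT matrix. -/
noncomputable def dft (N : ℕ) : Matrix (Fin N) (Fin N) ℂ :=
  Matrix.of fun k n : Fin N =>
    ((1 / Real.sqrt N : ℝ) : ℂ) *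
      Complex.exp (-2 * (Real.pi : ℂ) * Complex.I * ((k : ℕ) : ℂ) * ((n : ℕ) : ℂ) / (N : ℂ))

/-- Cyclic convolution on `ℂ^N`. -/
noncomputable def cconv {N : ℕ} (c x : Fin N → ℂ) : Fin N → ℂ := fun n => ∑ m, c m * x (n - m)

/-- Zero-padding of `h ∈ ℂ^L` to length `N`. -/
noncomputable def pad (N : ℕ) {L : ℕ} (hLN : L ≤ N) (h : Fin L → ℂ) : Fin N → ℂ :=
  fun n => if hn : (n : ℕ) < L then h ⟨n, hn⟩ else 0

/-- Toeplitz channel matrix `T(h) ∈ ℂ^{N×(N+P)}`. -/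
noncomputable def toep (N : ℕ) {L : ℕ} (P : ℕ) (h : Fin L → ℂ) : Matrix (Fin N) (Fin (N + P)) ℂ :=
  Matrix.of fun (n : Fin N) (m : Fin (N + P)) =>
    if hk : 0 ≤ (P : ℤ) + (n : ℕ) - (m : ℕ) ∧ (P : ℤ) + (n : ℕ) - (m : ℕ) ≤ (L : ℤ) - 1
    then h ⟨((P : ℤ) + (n : ℕ) - (m : ℕ)).toNat, by omega⟩ else 0

/-- First `P` columns of `T(h)`. -/
noncomputable def toepP (N : ℕ) {L : ℕ} (P : ℕ) (h : Fin L → ℂ) : Matrix (Fin N) (Fin P) ℂ :=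
  Matrix.of fun n m => toep N P h n ⟨(m : ℕ), by have := m.isLt; omega⟩

/-- Last `N` entries of `w ∈ ℂ^{N+P}`. -/
noncomputable def wStar (N P : ℕ) (w : Fin (N + P) → ℂ) : Fin N → ℂ :=
  fun n => w ⟨P + (n : ℕ), by have := n.isLt; omega⟩

/-- First `P` entries of `w` minus the last `P` entries of `w*`. -/
noncomputable def deltaP (N P : ℕ) (hPN : P ≤ N) (w : Fin (N + P) → ℂ) : Fin P → ℂ :=
  fun m => w ⟨(m : ℕ), by have := m.isLt; omega⟩ -
    wStar N P w ⟨N - P + (m : ℕ), by have := m.isLt; omega⟩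

/-- Cyclic-prefixed sequence: prepend the last `P` entries of `x` to `x`. -/
noncomputable def cyclicPrefix (N P : ℕ) (hPN : P ≤ N) (x : Fin N → ℂ) : Fin (N + P) → ℂ :=
  fun m => if hm : (m : ℕ) < P then x ⟨N - P + (m : ℕ), by omega⟩
           else x ⟨(m : ℕ) - P, by have := m.isLt; omega⟩

/-- Effective jammer channel matrix `𝗝[k] = [√N ĵ[k], R[k]]`. -/
noncomputable def effJ (N : ℕ) {L : ℕ} (P B : ℕ) (hLN : L ≤ N) (h : Fin B → Fin L → ℂ)
    (k : Fin N) : Matrix (Fin B) (Fin (P + 1)) ℂ :=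
  Matrix.of fun b : Fin B =>
    Fin.cons ((Real.sqrt N : ℂ) * (dft N *ᵥ pad N hLN (h b)) k)
      (fun m : Fin P => Matrix.vecMul (dft N k) (toepP N P (h b)) m)


/-! ### Auxiliary lemmas for `stmt14` -/

lemma toep_zero' (N L P : ℕ) : toep N (L := L) P (fun _ => (0:ℂ)) = 0 := by
  ext n m; unfold toep; simp

lemma toep_single' (N L P : ℕ) (b0 : ℕ) (n : Fin N) (m : Fin (N + P)) :
    toep N P (fun l : Fin L => if b0 = (l : ℕ) then (1:ℂ) else 0) n m
      = if (b0 < L ∧ (P : ℤ) + (n : ℕ) - (m : ℕ) = (b0 : ℤ)) then 1 else 0 := by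
  unfold toep
  simp only [Matrix.of_apply]
  by_cases hk : 0 ≤ (P : ℤ) + (n : ℕ) - (m : ℕ) ∧ (P : ℤ) + (n : ℕ) - (m : ℕ) ≤ (L : ℤ) - 1
  · rw [dif_pos hk]
    have hX : (((P : ℤ) + (n : ℕ) - (m : ℕ)).toNat : ℤ) = (P : ℤ) + (n : ℕ) - (m : ℕ) :=
      Int.toNat_of_nonneg hk.1
    split_ifs with h1 h2 h2 <;> first | rfl | omega
  · rw [dif_neg hk, if_neg]
    rintro ⟨hbL, heq⟩
    exact hk ⟨by omega, by omega⟩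

lemma dft_zero_col' (N : ℕ) (hN : 0 < N) (k : Fin N) :
    dft N k ⟨0, hN⟩ = ((1 / Real.sqrt N : ℝ) : ℂ) := by
  simp [dft]

noncomputable def fvec (N L : ℕ) (hLN : L ≤ N) (k : Fin N) (B : ℕ) (c : Fin L) : Fin B → ℂ :=
  fun b => if h : (c : ℕ) ≤ (b : ℕ) ∧ (b : ℕ) < L then dft N k ⟨(b : ℕ) - (c : ℕ), by omega⟩ else 0

lemma key' (N L P B : ℕ) (hL : 1 ≤ L) (hLN : L ≤ N) (hP : L - 1 ≤ P) (k : Fin N)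
    (b : Fin B) (c : Fin L) :
    (dft N *ᵥ (toep N P (fun l : Fin L => if (b : ℕ) = (l : ℕ) then (1:ℂ) else 0) *ᵥ
        Pi.single (⟨P - (c : ℕ), by omega⟩ : Fin (N + P)) (1 : ℂ))) k
      = fvec N L hLN k B c b := by
  have hc : (c : ℕ) ≤ P := by have := c.isLt; omega
  rw [Matrix.mulVec_single_one]
  show (∑ n, dft N k n * (toep N P (fun l : Fin L => if (b : ℕ) = (l : ℕ) then (1:ℂ) else 0) n ⟨P - (c:ℕ), by omega⟩)) = _
  simp only [toep_single', mul_one]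
  unfold fvec
  by_cases h : (c : ℕ) ≤ (b : ℕ) ∧ (b : ℕ) < L
  · rw [dif_pos h]
    have hbc : (b : ℕ) - (c : ℕ) < N := by omega
    rw [Finset.sum_eq_single_of_mem (⟨(b:ℕ) - (c:ℕ), hbc⟩ : Fin N) (Finset.mem_univ _)]
    · rw [if_pos ⟨h.2, by simp only [Fin.val_mk]; omega⟩, mul_one]
    · intro n _ hn
      rw [if_neg, mul_zero]
      rintro ⟨h1, h2⟩
      exact hn (Fin.ext (by simp only [Fin.val_mk]; omega))
  · rw [dif_neg h]
    apply Finset.sum_eq_zero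
    intro n _
    rw [if_neg, mul_zero]
    rintro ⟨h1, h2⟩
    exact h ⟨by omega, h1⟩

noncomputable def iotaMap (L B : ℕ) : (Fin L → ℂ) →ₗ[ℂ] (Fin B → ℂ) where
  toFun y := fun b => if h : (b : ℕ) < L then y ⟨b, h⟩ else 0
  map_add' x y := by funext b; by_cases h : (b : ℕ) < L <;> simp [h]
  map_smul' r x := by funext b; by_cases h : (b : ℕ) < L <;> simp [h]

lemma fvec_indep (N L B : ℕ) (hL : 1 ≤ L) (hLN : L ≤ N) (hLB : L ≤ B) (k : Fin N) :
    LinearIndependent ℂ (fvec N L hLN k B) := by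
  have hN : 0 < N := by omega
  set M : Matrix (Fin L) (Fin L) ℂ :=
    Matrix.of (fun c b => fvec N L hLN k B c (Fin.castLE hLB b)) with hM
  have htri : M.BlockTriangular id := by
    intro i j hlt
    show fvec N L hLN k B i (Fin.castLE hLB j) = 0
    unfold fvec
    rw [dif_neg]
    rintro ⟨h1, -⟩
    simp only [Fin.coe_castLE] at h1
    have hji : (j : ℕ) < (i : ℕ) := hlt
    omega
  have hdiag : ∀ c, M c c = dft N k ⟨0, hN⟩ := by
    intro c
    show fvec N L hLN k B c (Fin.castLE hLB c) = _
    unfold fvec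
    rw [dif_pos ⟨by simp, by simpa using c.isLt⟩]
    congr 1
    exact Fin.ext (by simp)
  have hd0 : dft N k ⟨0, hN⟩ ≠ 0 := by
    rw [dft_zero_col' N hN k]
    exact_mod_cast one_div_ne_zero (Real.sqrt_ne_zero'.2 (by exact_mod_cast hN))
  have hdet : M.det ≠ 0 := by
    rw [Matrix.det_of_upperTriangular htri]
    exact Finset.prod_ne_zero_iff.2 fun c _ => by rw [hdiag c]; exact hd0
  have hrows : LinearIndependent ℂ (fun c => M c) :=
    Matrix.linearIndependent_rows_iff_isUnit.2
      ((Matrix.isUnit_iff_isUnit_det M).2 (isUnit_iff_ne_zero.2 hdet))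
  exact LinearIndependent.of_comp (LinearMap.funLeft ℂ ℂ (Fin.castLE hLB)) hrows

/-- **Theorem 1, tightness.** With impulse responses `h_b = e_b` for
`b = 1,…,L` and `h_b = 0` for `b = L+1,…,B` (encoded as `h b l = if b = l then 1 else 0`),
the per-subcarrier receive interference spans a subspace of dimension exactly `L`. -/
theorem stmt14 (N L P B : ℕ) (hL : 1 ≤ L) (hLN : L ≤ N) (hP : L - 1 ≤ P) (hPN : P ≤ N)
    (hLB : L ≤ B) (k : Fin N) :
    Module.finrank ℂ (Submodule.span ℂ (Set.range (fun w : Fin (N + P) → ℂ =>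
        fun b : Fin B =>
          (dft N *ᵥ (toep N P (fun l : Fin L => if (b : ℕ) = (l : ℕ) then 1 else 0) *ᵥ w))
            k))) = L := by
  have hN : 0 < N := by omega
  set Φ : (Fin (N + P) → ℂ) → (Fin B → ℂ) := fun w => fun b =>
      (dft N *ᵥ (toep N P (fun l : Fin L => if (b : ℕ) = (l : ℕ) then 1 else 0) *ᵥ w)) k with hΦ
  have hsub : Set.range Φ ⊆ (LinearMap.range (iotaMap L B) : Set (Fin B → ℂ)) := by
    rintro _ ⟨w, rfl⟩
    refine ⟨fun c => Φ w (Fin.castLE hLB c), ?_⟩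
    funext b
    show (if h : (b : ℕ) < L then Φ w (Fin.castLE hLB ⟨b, h⟩) else 0) = Φ w b
    by_cases hb : (b : ℕ) < L
    · rw [dif_pos hb]
      congr 1
    · rw [dif_neg hb]
      have hz : (fun l : Fin L => if (b : ℕ) = (l : ℕ) then (1:ℂ) else 0) = fun _ => 0 := by
        funext l; rw [if_neg]; have := l.isLt; omega
      simp only [hΦ, hz, toep_zero', Matrix.zero_mulVec, Matrix.mulVec_zero, Pi.zero_apply]
  have hι : Function.Injective (iotaMap L B) := by
    intro x y hxy
    funext c
    have := congrFun hxy (Fin.castLE hLB c)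
    simpa [iotaMap, c.isLt, Fin.eta] using this
  have hrk : Module.finrank ℂ (LinearMap.range (iotaMap L B)) = L := by
    rw [LinearMap.finrank_range_of_inj hι]
    simp
  have hmem : ∀ c : Fin L, fvec N L hLN k B c ∈ Set.range Φ := fun c =>
    ⟨Pi.single (⟨P - (c : ℕ), by omega⟩ : Fin (N + P)) (1 : ℂ),
      funext fun b => key' N L P B hL hLN hP k b c⟩
  have hindep := fvec_indep N L B hL hLN hLB k
  apply le_antisymm
  · rw [← hrk]
    exact Submodule.finrank_mono (Submodule.span_le.2 hsub)
  · have h1 : Submodule.span ℂ (Set.range (fvec N L hLN k B)) ≤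
        Submodule.span ℂ (Set.range Φ) :=
      Submodule.span_mono (Set.range_subset_iff.2 hmem)
    calc L = Module.finrank ℂ (Submodule.span ℂ (Set.range (fvec N L hLN k B))) := by
              rw [finrank_span_eq_card hindep]; simp
      _ ≤ _ := Submodule.finrank_mono h1
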